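/- Let [a,b] be a compact interval and f : [a,b] → ℝ a continuously differentiable function. Then its convex envelope f** is also continuously differentiable on [a,b]. -/

import Mathlib

open Set MeasureTheory Filter Topology

/-- The convex envelope (convexification) of `f` on `[a,b]`:
`f**(x) = inf {(1-λ) f x₀ + λ f x₁ : λ ∈ [0,1], x₀, x₁ ∈ [a,b], (1-λ) x₀ + λ x₁ = x}`. -/
noncomputable def convEnv (a b : ℝ) (f : ℝ → ℝ) : ℝ → ℝ := fun x =>
  sInf {y : ℝ | ∃ lam x₀ x₁ : ℝ, lam ∈ Set.Icc (0:ℝ) 1 ∧ x₀ ∈ Set.Icc a b ∧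
    x₁ ∈ Set.Icc a b ∧ (1 - lam) * x₀ + lam * x₁ = x ∧
    y = (1 - lam) * f x₀ + lam * f x₁}

namespace ConvEnvAux

variable {a b : ℝ} {f : ℝ → ℝ}

def repSet (a b : ℝ) (f : ℝ → ℝ) (x : ℝ) : Set ℝ :=
  {y : ℝ | ∃ lam x₀ x₁ : ℝ, lam ∈ Set.Icc (0:ℝ) 1 ∧ x₀ ∈ Set.Icc a b ∧
    x₁ ∈ Set.Icc a b ∧ (1 - lam) * x₀ + lam * x₁ = x ∧
    y = (1 - lam) * f x₀ + lam * f x₁}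

lemma convEnv_eq (x : ℝ) : convEnv a b f x = sInf (repSet a b f x) := rfl

lemma mem_repSet_self (hx : x ∈ Icc a b) : f x ∈ repSet a b f x := by
  refine ⟨0, x, x, by norm_num, hx, hx, by ring, by ring⟩

lemma repSet_nonempty (hx : x ∈ Icc a b) : (repSet a b f x).Nonempty :=
  ⟨f x, mem_repSet_self hx⟩

lemma repSet_bddBelow (hf : ContinuousOn f (Icc a b)) (x : ℝ) :
    BddBelow (repSet a b f x) := by
  rcases le_or_gt a b with hab | hab
  · have hcpt : IsCompact (f '' Icc a b) := (isCompact_Icc).image_of_continuousOn hf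
    have hbdd : BddBelow (f '' Icc a b) := hcpt.bddBelow
    set m := sInf (f '' Icc a b) with hm
    refine ⟨m, fun y hy => ?_⟩
    obtain ⟨l, p, q, hl, hp, hq, -, hval⟩ := hy
    have hfp : m ≤ f p := csInf_le hbdd (mem_image_of_mem f hp)
    have hfq : m ≤ f q := csInf_le hbdd (mem_image_of_mem f hq)
    have h1 : 0 ≤ 1 - l := by linarith [hl.2]
    nlinarith [hl.1, mul_le_mul_of_nonneg_left hfp h1, mul_le_mul_of_nonneg_left hfq hl.1]
  · refine ⟨0, fun y hy => ?_⟩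
    obtain ⟨l, p, q, hl, hp, hq, -, -⟩ := hy
    exact absurd (hp.1.trans hp.2) (not_le.2 hab)

lemma convEnv_le (hf : ContinuousOn f (Icc a b)) {lam p q x : ℝ}
    (hl : lam ∈ Icc (0:ℝ) 1) (hp : p ∈ Icc a b) (hq : q ∈ Icc a b)
    (hpq : (1 - lam) * p + lam * q = x) :
    convEnv a b f x ≤ (1 - lam) * f p + lam * f q :=
  csInf_le (repSet_bddBelow hf x) ⟨lam, p, q, hl, hp, hq, hpq, rfl⟩

lemma convEnv_le_self (hf : ContinuousOn f (Icc a b)) (hx : x ∈ Icc a b) :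
    convEnv a b f x ≤ f x := by
  have h := convEnv_le (lam := 0) hf (by norm_num) hx hx (by ring)
  simpa using h

lemma exists_attain (hf : ContinuousOn f (Icc a b)) (hx : x ∈ Icc a b) :
    ∃ lam p q : ℝ, lam ∈ Icc (0:ℝ) 1 ∧ p ∈ Icc a b ∧ q ∈ Icc a b ∧
      (1 - lam) * p + lam * q = x ∧ convEnv a b f x = (1 - lam) * f p + lam * f q := by
  set T : Set (ℝ × ℝ × ℝ) :=
    (Icc (0:ℝ) 1 ×ˢ Icc a b ×ˢ Icc a b) ∩
      {z | (1 - z.1) * z.2.1 + z.1 * z.2.2 = x} with hT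
  have hTc : IsCompact T := by
    apply ((isCompact_Icc.prod (isCompact_Icc.prod isCompact_Icc))).inter_right
    exact isClosed_eq (by fun_prop) continuous_const
  have hTne : T.Nonempty := ⟨(0, x, x), ⟨by norm_num, hx, hx⟩, by simp⟩
  set V : ℝ × ℝ × ℝ → ℝ := fun z => (1 - z.1) * f z.2.1 + z.1 * f z.2.2 with hV
  have hVc : ContinuousOn V T := by
    apply ContinuousOn.add
    · apply ContinuousOn.mul
      · fun_prop
      · exact hf.comp (by fun_prop) (fun z hz => hz.1.2.1)
    · apply ContinuousOn.mul
      · fun_prop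
      · exact hf.comp (by fun_prop) (fun z hz => hz.1.2.2)
  obtain ⟨z₀, hz₀T, hz₀min⟩ := hTc.exists_isMinOn hTne hVc
  refine ⟨z₀.1, z₀.2.1, z₀.2.2, hz₀T.1.1, hz₀T.1.2.1, hz₀T.1.2.2, hz₀T.2, ?_⟩
  apply le_antisymm
  · exact convEnv_le hf hz₀T.1.1 hz₀T.1.2.1 hz₀T.1.2.2 hz₀T.2
  · apply le_csInf (repSet_nonempty hx)
    rintro y ⟨l, p, q, hl, hp, hq, hpq, rfl⟩
    exact hz₀min (⟨⟨hl, hp, hq⟩, hpq⟩ : (l, p, q) ∈ T)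

lemma two_point {lo hi z V : ℝ} (h : lo < hi) (h1 : lo ≤ z) (h2 : z ≤ hi)
    (hV : (hi - z) * f lo + (z - lo) * f hi ≤ (hi - lo) * V) :
    ∃ l : ℝ, l ∈ Icc (0:ℝ) 1 ∧ (1 - l) * lo + l * hi = z ∧
      (1 - l) * f lo + l * f hi ≤ V := by
  have hpos : (0:ℝ) < hi - lo := by linarith
  refine ⟨(z - lo) / (hi - lo), ⟨div_nonneg (by linarith) (by linarith), ?_⟩, ?_, ?_⟩
  · rw [div_le_one hpos]; linarith
  · field_simp
    ring
  · rw [show (1 - (z - lo) / (hi - lo)) * f lo + (z - lo) / (hi - lo) * f hi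
        = ((hi - z) * f lo + (z - lo) * f hi) / (hi - lo) by field_simp; ring]
    rw [div_le_iff₀ hpos]
    linarith
lemma three_to_two_sorted {u v w r₀ r₁ r₂ : ℝ} (hu : 0 ≤ u) (hv : 0 ≤ v) (hw : 0 ≤ w)
    (hsum : u + v + w = 1) (h01 : r₀ ≤ r₁) (h12 : r₁ ≤ r₂)
    (hr₀ : r₀ ∈ Icc a b) (hr₁ : r₁ ∈ Icc a b) (hr₂ : r₂ ∈ Icc a b) :
    ∃ l p q : ℝ, l ∈ Icc (0:ℝ) 1 ∧ p ∈ Icc a b ∧ q ∈ Icc a b ∧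
      (1 - l) * p + l * q = u * r₀ + v * r₁ + w * r₂ ∧
      (1 - l) * f p + l * f q ≤ u * f r₀ + v * f r₁ + w * f r₂ := by
  have hu' : u = 1 - v - w := by linarith
  subst hu'
  rcases eq_or_lt_of_le h01 with h01e | h01l
  · subst h01e
    rcases eq_or_lt_of_le h12 with h02e | h02l
    · subst h02e
      exact ⟨0, r₀, r₀, by norm_num, hr₀, hr₀, by ring, le_of_eq (by ring)⟩
    · have hz0 : r₀ ≤ (1 - v - w) * r₀ + v * r₀ + w * r₂ := by
        nlinarith [mul_nonneg hw (by linarith : (0:ℝ) ≤ r₂ - r₀)]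
      have hz2 : (1 - v - w) * r₀ + v * r₀ + w * r₂ ≤ r₂ := by
        nlinarith [mul_nonneg hu (by linarith : (0:ℝ) ≤ r₂ - r₀),
          mul_nonneg hv (by linarith : (0:ℝ) ≤ r₂ - r₀)]
      obtain ⟨l, hl, hpt, hval⟩ := two_point (f := f)
        (V := (1 - v - w) * f r₀ + v * f r₀ + w * f r₂) h02l hz0 hz2 (le_of_eq (by ring))
      exact ⟨l, r₀, r₂, hl, hr₀, hr₂, hpt, hval⟩
  · rcases eq_or_lt_of_le h12 with h12e | h12l
    · subst h12e
      have hz0 : r₀ ≤ (1 - v - w) * r₀ + v * r₁ + w * r₁ := by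
        nlinarith [mul_nonneg hv (by linarith : (0:ℝ) ≤ r₁ - r₀),
          mul_nonneg hw (by linarith : (0:ℝ) ≤ r₁ - r₀)]
      have hz1 : (1 - v - w) * r₀ + v * r₁ + w * r₁ ≤ r₁ := by
        nlinarith [mul_nonneg hu (by linarith : (0:ℝ) ≤ r₁ - r₀)]
      obtain ⟨l, hl, hpt, hval⟩ := two_point (f := f)
        (V := (1 - v - w) * f r₀ + v * f r₁ + w * f r₁) h01l hz0 hz1 (le_of_eq (by ring))
      exact ⟨l, r₀, r₁, hl, hr₀, hr₁, hpt, hval⟩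
    · -- main case : r₀ < r₁ < r₂
      have hz0 : r₀ ≤ (1 - v - w) * r₀ + v * r₁ + w * r₂ := by
        nlinarith [mul_nonneg hv (by linarith : (0:ℝ) ≤ r₁ - r₀),
          mul_nonneg hw (by linarith : (0:ℝ) ≤ r₂ - r₀)]
      have hz2 : (1 - v - w) * r₀ + v * r₁ + w * r₂ ≤ r₂ := by
        nlinarith [mul_nonneg hu (by linarith : (0:ℝ) ≤ r₂ - r₀),
          mul_nonneg hv (by linarith : (0:ℝ) ≤ r₂ - r₁)]
      by_cases key : (r₂ - r₀) * f r₁ ≤ (r₂ - r₁) * f r₀ + (r₁ - r₀) * f r₂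
      · rcases le_or_gt ((1 - v - w) * r₀ + v * r₁ + w * r₂) r₁ with hz1 | hz1
        · obtain ⟨l, hl, hpt, hval⟩ := two_point (f := f)
            (V := (1 - v - w) * f r₀ + v * f r₁ + w * f r₂) h01l hz0 hz1 (by
            nlinarith [mul_le_mul_of_nonneg_left key hw])
          exact ⟨l, r₀, r₁, hl, hr₀, hr₁, hpt, hval⟩
        · obtain ⟨l, hl, hpt, hval⟩ := two_point (f := f)
            (V := (1 - v - w) * f r₀ + v * f r₁ + w * f r₂) h12l hz1.le hz2 (by
            nlinarith [mul_le_mul_of_nonneg_left key hu])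
          exact ⟨l, r₁, r₂, hl, hr₁, hr₂, hpt, hval⟩
      · push_neg at key
        obtain ⟨l, hl, hpt, hval⟩ := two_point (f := f)
          (V := (1 - v - w) * f r₀ + v * f r₁ + w * f r₂) (h01l.trans h12l) hz0 hz2 (by
          nlinarith [mul_le_mul_of_nonneg_left key.le hv])
        exact ⟨l, r₀, r₂, hl, hr₀, hr₂, hpt, hval⟩

lemma three_to_two {u v w r₀ r₁ r₂ : ℝ} (hu : 0 ≤ u) (hv : 0 ≤ v) (hw : 0 ≤ w)
    (hsum : u + v + w = 1)
    (hr₀ : r₀ ∈ Icc a b) (hr₁ : r₁ ∈ Icc a b) (hr₂ : r₂ ∈ Icc a b) :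
    ∃ l p q : ℝ, l ∈ Icc (0:ℝ) 1 ∧ p ∈ Icc a b ∧ q ∈ Icc a b ∧
      (1 - l) * p + l * q = u * r₀ + v * r₁ + w * r₂ ∧
      (1 - l) * f p + l * f q ≤ u * f r₀ + v * f r₁ + w * f r₂ := by
  rcases le_total r₀ r₁ with h01 | h01 <;> rcases le_total r₁ r₂ with h12 | h12 <;>
    rcases le_total r₀ r₂ with h02 | h02
  · obtain ⟨l, p, q, h₁, h₂, h₃, h₄, h₅⟩ :=
      three_to_two_sorted (f := f) hu hv hw (by linarith) h01 h12 hr₀ hr₁ hr₂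
    exact ⟨l, p, q, h₁, h₂, h₃, by linarith, by linarith⟩
  · obtain ⟨l, p, q, h₁, h₂, h₃, h₄, h₅⟩ :=
      three_to_two_sorted (f := f) hu hv hw (by linarith) h01 h12 hr₀ hr₁ hr₂
    exact ⟨l, p, q, h₁, h₂, h₃, by linarith, by linarith⟩
  · obtain ⟨l, p, q, h₁, h₂, h₃, h₄, h₅⟩ :=
      three_to_two_sorted (f := f) hu hw hv (by linarith) h02 h12 hr₀ hr₂ hr₁
    exact ⟨l, p, q, h₁, h₂, h₃, by linarith, by linarith⟩
  · obtain ⟨l, p, q, h₁, h₂, h₃, h₄, h₅⟩ :=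
      three_to_two_sorted (f := f) hw hu hv (by linarith) h02 h01 hr₂ hr₀ hr₁
    exact ⟨l, p, q, h₁, h₂, h₃, by linarith, by linarith⟩
  · obtain ⟨l, p, q, h₁, h₂, h₃, h₄, h₅⟩ :=
      three_to_two_sorted (f := f) hv hu hw (by linarith) h01 h02 hr₁ hr₀ hr₂
    exact ⟨l, p, q, h₁, h₂, h₃, by linarith, by linarith⟩
  · obtain ⟨l, p, q, h₁, h₂, h₃, h₄, h₅⟩ :=
      three_to_two_sorted (f := f) hv hw hu (by linarith) h12 h02 hr₁ hr₂ hr₀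
    exact ⟨l, p, q, h₁, h₂, h₃, by linarith, by linarith⟩
  · obtain ⟨l, p, q, h₁, h₂, h₃, h₄, h₅⟩ :=
      three_to_two_sorted (f := f) hw hv hu (by linarith) h12 h01 hr₂ hr₁ hr₀
    exact ⟨l, p, q, h₁, h₂, h₃, by linarith, by linarith⟩
  · obtain ⟨l, p, q, h₁, h₂, h₃, h₄, h₅⟩ :=
      three_to_two_sorted (f := f) hw hv hu (by linarith) h12 h01 hr₂ hr₁ hr₀
    exact ⟨l, p, q, h₁, h₂, h₃, by linarith, by linarith⟩

lemma four_point (hf : ContinuousOn f (Icc a b)) {w₁ w₂ w₃ w₄ r₁ r₂ r₃ r₄ : ℝ}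
    (h1 : 0 ≤ w₁) (h2 : 0 ≤ w₂) (h3 : 0 ≤ w₃) (h4 : 0 ≤ w₄)
    (hsum : w₁ + w₂ + w₃ + w₄ = 1)
    (hr₁ : r₁ ∈ Icc a b) (hr₂ : r₂ ∈ Icc a b) (hr₃ : r₃ ∈ Icc a b) (hr₄ : r₄ ∈ Icc a b) :
    convEnv a b f (w₁ * r₁ + w₂ * r₂ + w₃ * r₃ + w₄ * r₄) ≤
      w₁ * f r₁ + w₂ * f r₂ + w₃ * f r₃ + w₄ * f r₄ := by
  rcases eq_or_lt_of_le (add_nonneg (add_nonneg h1 h2) h3) with hW | hW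
  · have hw1 : w₁ = 0 := by linarith
    have hw2 : w₂ = 0 := by linarith
    have hw3 : w₃ = 0 := by linarith
    have hw4 : w₄ = 1 := by linarith
    rw [hw1, hw2, hw3, hw4]
    simpa using convEnv_le_self hf hr₄
  · have hWne : w₁ + w₂ + w₃ ≠ 0 := ne_of_gt hW
    obtain ⟨l, p, q, hl, hp, hq, hpt, hval⟩ :=
      three_to_two (f := f) (u := w₁ / (w₁ + w₂ + w₃)) (v := w₂ / (w₁ + w₂ + w₃))
        (w := w₃ / (w₁ + w₂ + w₃)) (div_nonneg h1 hW.le) (div_nonneg h2 hW.le)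
        (div_nonneg h3 hW.le) (by field_simp) hr₁ hr₂ hr₃
    obtain ⟨l', p', q', hl', hp', hq', hpt', hval'⟩ :=
      three_to_two (f := f) (u := (w₁ + w₂ + w₃) * (1 - l)) (v := (w₁ + w₂ + w₃) * l)
        (w := w₄) (mul_nonneg hW.le (by linarith [hl.2])) (mul_nonneg hW.le hl.1) h4
        (by linarith) hp hq hr₄
    have hWpt : (w₁ + w₂ + w₃) * ((1 - l) * p + l * q) = w₁ * r₁ + w₂ * r₂ + w₃ * r₃ := by
      rw [hpt]; field_simp
    have hWval : (w₁ + w₂ + w₃) * ((1 - l) * f p + l * f q)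
        ≤ w₁ * f r₁ + w₂ * f r₂ + w₃ * f r₃ := by
      have := mul_le_mul_of_nonneg_left hval hW.le
      calc (w₁ + w₂ + w₃) * ((1 - l) * f p + l * f q) ≤
          (w₁ + w₂ + w₃) * (w₁ / (w₁ + w₂ + w₃) * f r₁ + w₂ / (w₁ + w₂ + w₃) * f r₂ +
            w₃ / (w₁ + w₂ + w₃) * f r₃) := this
        _ = w₁ * f r₁ + w₂ * f r₂ + w₃ * f r₃ := by field_simp
    have hptfin : (1 - l') * p' + l' * q' = w₁ * r₁ + w₂ * r₂ + w₃ * r₃ + w₄ * r₄ := by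
      rw [hpt']; nlinarith [hWpt]
    have := convEnv_le hf hl' hp' hq' hptfin
    nlinarith [hval']

lemma convexOn (hf : ContinuousOn f (Icc a b)) :
    ConvexOn ℝ (Icc a b) (convEnv a b f) := by
  refine ⟨convex_Icc a b, fun x hx y hy tx ty htx hty hsum => ?_⟩
  obtain ⟨lx, px, qx, hlx, hpx, hqx, hptx, hvalx⟩ := exists_attain hf hx
  obtain ⟨ly, py, qy, hly, hpy, hqy, hpty, hvaly⟩ := exists_attain hf hy
  have key := four_point hf (w₁ := tx * (1 - lx)) (w₂ := tx * lx)
    (w₃ := ty * (1 - ly)) (w₄ := ty * ly) (r₁ := px) (r₂ := qx) (r₃ := py) (r₄ := qy)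
    (mul_nonneg htx (by linarith [hlx.2])) (mul_nonneg htx hlx.1)
    (mul_nonneg hty (by linarith [hly.2])) (mul_nonneg hty hly.1)
    (by linear_combination hsum) hpx hqx hpy hqy
  have hpteq : tx * (1 - lx) * px + tx * lx * qx + ty * (1 - ly) * py + ty * ly * qy
      = tx * x + ty * y := by
    rw [← hptx, ← hpty]; ring
  have hvaleq : tx * (1 - lx) * f px + tx * lx * f qx + ty * (1 - ly) * f py + ty * ly * f qy
      = tx * convEnv a b f x + ty * convEnv a b f y := by
    rw [hvalx, hvaly]; ring
  calc convEnv a b f (tx • x + ty • y) = convEnv a b f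
        (tx * (1 - lx) * px + tx * lx * qx + ty * (1 - ly) * py + ty * ly * qy) := by
        rw [hpteq]; norm_num
    _ ≤ _ := key.trans_eq hvaleq

lemma convEnv_left (hab : a ≤ b) (hf : ContinuousOn f (Icc a b)) :
    convEnv a b f a = f a := by
  have ha : a ∈ Icc a b := ⟨le_refl a, hab⟩
  refine le_antisymm (convEnv_le_self hf ha) (le_csInf (repSet_nonempty ha) ?_)
  rintro y ⟨l, p, q, hl, hp, hq, hpq, rfl⟩
  have h1 : 0 ≤ 1 - l := by linarith [hl.2]
  have e1 : (1 - l) * (p - a) = 0 ∧ l * (q - a) = 0 := by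
    constructor <;>
      nlinarith [mul_nonneg h1 (sub_nonneg.2 hp.1), mul_nonneg hl.1 (sub_nonneg.2 hq.1)]
  have hfp : (1 - l) * f p = (1 - l) * f a := by
    rcases eq_or_lt_of_le h1 with h | h
    · rw [← h]; ring
    · have : p = a := by
        have := e1.1
        nlinarith
      rw [this]
  have hfq : l * f q = l * f a := by
    rcases eq_or_lt_of_le hl.1 with h | h
    · rw [← h]; ring
    · have : q = a := by nlinarith [e1.2]
      rw [this]
  rw [hfp, hfq]; linarith

lemma convEnv_right (hab : a ≤ b) (hf : ContinuousOn f (Icc a b)) :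
    convEnv a b f b = f b := by
  have hb : b ∈ Icc a b := ⟨hab, le_refl b⟩
  refine le_antisymm (convEnv_le_self hf hb) (le_csInf (repSet_nonempty hb) ?_)
  rintro y ⟨l, p, q, hl, hp, hq, hpq, rfl⟩
  have h1 : 0 ≤ 1 - l := by linarith [hl.2]
  have e1 : (1 - l) * (b - p) = 0 ∧ l * (b - q) = 0 := by
    constructor <;>
      nlinarith [mul_nonneg h1 (sub_nonneg.2 hp.2), mul_nonneg hl.1 (sub_nonneg.2 hq.2)]
  have hfp : (1 - l) * f p = (1 - l) * f b := by
    rcases eq_or_lt_of_le h1 with h | h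
    · rw [← h]; ring
    · have : p = b := by nlinarith [e1.1]
      rw [this]
  have hfq : l * f q = l * f b := by
    rcases eq_or_lt_of_le hl.1 with h | h
    · rw [← h]; ring
    · have : q = b := by nlinarith [e1.2]
      rw [this]
  rw [hfp, hfq]; linarith

section Lip

variable {L : ℝ} (hab : a ≤ b) (hf : ContinuousOn f (Icc a b)) (hL : 0 ≤ L)
  (hLf : ∀ p ∈ Icc a b, ∀ q ∈ Icc a b, |f p - f q| ≤ L * |p - q|)

include hab hf hL hLf

lemma lower_left (hx : x ∈ Icc a b) : f a - L * (x - a) ≤ convEnv a b f x := by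
  have ha : a ∈ Icc a b := ⟨le_refl a, hab⟩
  refine le_csInf (repSet_nonempty hx) ?_
  rintro y ⟨l, p, q, hl, hp, hq, hpq, rfl⟩
  have h1 : 0 ≤ 1 - l := by linarith [hl.2]
  have hbp : f a - L * (p - a) ≤ f p := by
    have h := abs_le.1 (hLf p hp a ha)
    rw [abs_of_nonneg (sub_nonneg.2 hp.1)] at h
    linarith [h.1]
  have hbq : f a - L * (q - a) ≤ f q := by
    have h := abs_le.1 (hLf q hq a ha)
    rw [abs_of_nonneg (sub_nonneg.2 hq.1)] at h
    linarith [h.1]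
  have hx' : L * ((1 - l) * p + l * q) = L * x := by rw [hpq]
  nlinarith [mul_le_mul_of_nonneg_left hbp h1, mul_le_mul_of_nonneg_left hbq hl.1]

lemma lower_right (hx : x ∈ Icc a b) : f b - L * (b - x) ≤ convEnv a b f x := by
  have hb : b ∈ Icc a b := ⟨hab, le_refl b⟩
  refine le_csInf (repSet_nonempty hx) ?_
  rintro y ⟨l, p, q, hl, hp, hq, hpq, rfl⟩
  have h1 : 0 ≤ 1 - l := by linarith [hl.2]
  have hbp : f b - L * (b - p) ≤ f p := by
    have h := abs_le.1 (hLf p hp b hb)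
    rw [abs_of_nonpos (by linarith [hp.2] : p - b ≤ 0)] at h
    linarith [h.1]
  have hbq : f b - L * (b - q) ≤ f q := by
    have h := abs_le.1 (hLf q hq b hb)
    rw [abs_of_nonpos (by linarith [hq.2] : q - b ≤ 0)] at h
    linarith [h.1]
  have hx' : L * ((1 - l) * p + l * q) = L * x := by rw [hpq]
  nlinarith [mul_le_mul_of_nonneg_left hbp h1, mul_le_mul_of_nonneg_left hbq hl.1]

lemma slope_bound (hx : x ∈ Icc a b) (hy : y ∈ Icc a b) (hxy : x < y) :
    -(L * (y - x)) ≤ convEnv a b f y - convEnv a b f x ∧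
      convEnv a b f y - convEnv a b f x ≤ L * (y - x) := by
  set g := convEnv a b f with hg
  have ha : a ∈ Icc a b := ⟨le_refl a, hab⟩
  have hb : b ∈ Icc a b := ⟨hab, le_refl b⟩
  have hconv := convexOn (f := f) hf
  constructor
  · -- lower bound : g x ≤ g y + L (y - x)
    have hgy : f a - L * (y - a) ≤ g y := lower_left hab hf hL hLf hy
    have hga : g a = f a := convEnv_left hab hf
    rcases eq_or_lt_of_le hx.1 with hax | hax
    · subst hax
      linarith
    · have haux := hconv.secant_mono_aux1 ha hy hax hxy
      nlinarith [haux, hgy, hga, hxy, hax]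
  · have hgx : f b - L * (b - x) ≤ g x := lower_right hab hf hL hLf hx
    have hgb : g b = f b := convEnv_right hab hf
    rcases eq_or_lt_of_le hy.2 with hyb | hyb
    · subst hyb
      linarith
    · have haux := hconv.secant_mono_aux1 hx hb hxy hyb
      nlinarith [haux, hgx, hgb, hxy, hyb]

lemma continuousOn_convEnv : ContinuousOn (convEnv a b f) (Icc a b) := by
  have key : ∀ x ∈ Icc a b, ∀ y ∈ Icc a b, |convEnv a b f y - convEnv a b f x| ≤ L * |y - x| := by
    intro x hx y hy
    rcases lt_trichotomy x y with h | h | h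
    · have := slope_bound hab hf hL hLf hx hy h
      rw [abs_of_pos (by linarith : (0:ℝ) < y - x)]
      rw [abs_le]; exact ⟨this.1, this.2⟩
    · simp [h]
    · have := slope_bound hab hf hL hLf hy hx h
      rw [abs_of_neg (by linarith : y - x < 0), abs_sub_comm]
      rw [abs_le]
      constructor <;> linarith [this.1, this.2]
  apply LipschitzOnWith.continuousOn (K := Real.toNNReal L)
  intro x hx y hy
  rw [edist_dist, edist_dist, dist_eq_norm]
  rw [← ENNReal.ofReal_coe_nnreal, ← ENNReal.ofReal_mul (by positivity)]
  apply ENNReal.ofReal_le_ofReal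
  rw [Real.coe_toNNReal L hL, Real.dist_eq]
  simpa [Real.norm_eq_abs] using key y hy x hx

end Lip

section Deriv

variable {L : ℝ}

lemma exists_hasDeriv_left (hab : a < b) (hf : ContinuousOn f (Icc a b)) (hL : 0 ≤ L)
    (hLf : ∀ p ∈ Icc a b, ∀ q ∈ Icc a b, |f p - f q| ≤ L * |p - q|) :
    ∃ d, HasDerivWithinAt (convEnv a b f) d (Icc a b) a := by
  set g := convEnv a b f with hg
  have hconv := convexOn (f := f) hf
  have ha : a ∈ Icc a b := ⟨le_refl a, hab.le⟩
  have mono : MonotoneOn (slope g a) (Ioo a b) := by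
    intro p hp q hq hpq
    have := hconv.secant_mono ha ⟨hp.1.le, hp.2.le⟩ ⟨hq.1.le, hq.2.le⟩
      (ne_of_gt hp.1) (ne_of_gt hq.1) hpq
    simpa [slope_def_field] using this
  have bdd : BddBelow (slope g a '' Ioo a b) := by
    refine ⟨-L, ?_⟩
    rintro _ ⟨p, hp, rfl⟩
    have hslope := (slope_bound hab.le hf hL hLf ha ⟨hp.1.le, hp.2.le⟩ hp.1).1
    rw [slope_def_field, le_div_iff₀ (by linarith [hp.1] : (0:ℝ) < p - a)]
    linarith
  refine ⟨sInf (slope g a '' Ioo a b), ?_⟩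
  rw [hasDerivWithinAt_iff_tendsto_slope, Icc_diff_left,
    nhdsWithin_Ioc_eq_nhdsGT hab]
  exact mono.tendsto_nhdsWithin_Ioo_right ⟨(a+b)/2, by constructor <;> linarith⟩ bdd

lemma exists_hasDeriv_right (hab : a < b) (hf : ContinuousOn f (Icc a b)) (hL : 0 ≤ L)
    (hLf : ∀ p ∈ Icc a b, ∀ q ∈ Icc a b, |f p - f q| ≤ L * |p - q|) :
    ∃ d, HasDerivWithinAt (convEnv a b f) d (Icc a b) b := by
  set g := convEnv a b f with hg
  have hconv := convexOn (f := f) hf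
  have hb : b ∈ Icc a b := ⟨hab.le, le_refl b⟩
  have mono : MonotoneOn (slope g b) (Ioo a b) := by
    intro p hp q hq hpq
    have := hconv.secant_mono hb ⟨hp.1.le, hp.2.le⟩ ⟨hq.1.le, hq.2.le⟩
      (ne_of_lt hp.2) (ne_of_lt hq.2) hpq
    simpa [slope_def_field] using this
  have bdd : BddAbove (slope g b '' Ioo a b) := by
    refine ⟨L, ?_⟩
    rintro _ ⟨p, hp, rfl⟩
    have hslope := (slope_bound hab.le hf hL hLf ⟨hp.1.le, hp.2.le⟩ hb hp.2).2
    rw [slope_comm, slope_def_field, div_le_iff₀ (by linarith [hp.2] : (0:ℝ) < b - p)]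
    linarith
  refine ⟨sSup (slope g b '' Ioo a b), ?_⟩
  rw [hasDerivWithinAt_iff_tendsto_slope, Icc_sdiff_right,
    nhdsWithin_Ico_eq_nhdsLT hab]
  exact mono.tendsto_nhdsWithin_Ioo_left ⟨(a+b)/2, by constructor <;> linarith⟩ bdd

lemma detach_core (hf : ContinuousOn f (Icc a b)) {l p q x : ℝ}
    (hp : p ∈ Icc a b) (hq : q ∈ Icc a b) (hl0 : 0 < l) (hl1 : l < 1) (hpq : p < q)
    (hpt : (1 - l) * p + l * q = x)
    (hval : convEnv a b f x = (1 - l) * f p + l * f q) :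
    ∃ d, HasDerivWithinAt (convEnv a b f) d (Icc a b) x := by
  set g := convEnv a b f with hg
  have hconv := convexOn (f := f) hf
  have hx0 : p < x := by nlinarith
  have hx1 : x < q := by nlinarith
  set m := (f q - f p) / (q - p) with hmdef
  have hqp : (0:ℝ) < q - p := by linarith
  have hm : (q - p) * m = f q - f p := by rw [hmdef]; field_simp
  have hxmem : x ∈ Icc a b := ⟨hp.1.trans hx0.le, hx1.le.trans hq.2⟩
  have hgle : ∀ t, p ≤ t → t ≤ q → g t ≤ f p + (t - p) * m := by
    intro t htp htq
    have hlam : (t - p) / (q - p) ∈ Icc (0:ℝ) 1 :=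
      ⟨div_nonneg (by linarith) hqp.le, by rw [div_le_one hqp]; linarith⟩
    have hpteq : (1 - (t - p) / (q - p)) * p + (t - p) / (q - p) * q = t := by
      field_simp; ring
    have := convEnv_le hf hlam hp hq hpteq
    calc g t ≤ (1 - (t - p) / (q - p)) * f p + (t - p) / (q - p) * f q := this
      _ = f p + (t - p) * m := by rw [hmdef]; field_simp; ring
  have hxp : x - p = l * (q - p) := by linear_combination - hpt
  have hgx : g x = f p + (x - p) * m := by
    rw [hval, hxp]; linear_combination (-l) * hm
  have hfq : f q = f p + (q - p) * m := by linarith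
  have hgeq : ∀ y ∈ Ioo p q, g y = f p + (y - p) * m := by
    intro y hy
    have hymem : y ∈ Icc a b := ⟨hp.1.trans hy.1.le, hy.2.le.trans hq.2⟩
    refine le_antisymm (hgle y hy.1.le hy.2.le) ?_
    by_contra hcon
    push_neg at hcon
    rcases lt_trichotomy y x with hyx | hyx | hyx
    · set t := (x - y) / (q - y) with htdef
      have hqy : (0:ℝ) < q - y := by linarith [hy.2]
      have ht0 : 0 < t := div_pos (by linarith) hqy
      have ht1 : t < 1 := by rw [div_lt_one hqy]; linarith
      have hpt2 : (1 - t) * y + t * q = x := by rw [htdef]; field_simp; ring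
      have hci := hconv.2 hymem hq (by linarith : (0:ℝ) ≤ 1 - t) ht0.le (by ring)
      simp only [smul_eq_mul] at hci
      rw [hpt2] at hci
      have hgq : g q ≤ f q := convEnv_le_self hf hq
      have hxm : ((1 - t) * y + t * q) * m = x * m := by rw [hpt2]
      nlinarith [mul_lt_mul_of_pos_left hcon (by linarith : (0:ℝ) < 1 - t),
        mul_le_mul_of_nonneg_left hgq ht0.le]
    · exact absurd (hyx ▸ hgx) (by linarith [hcon])
    · set t := (x - p) / (y - p) with htdef
      have hyp : (0:ℝ) < y - p := by linarith [hy.1]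
      have ht0 : 0 < t := div_pos (by linarith) hyp
      have ht1 : t < 1 := by rw [div_lt_one hyp]; linarith
      have hpt2 : (1 - t) * p + t * y = x := by rw [htdef]; field_simp; ring
      have hci := hconv.2 hp hymem (by linarith : (0:ℝ) ≤ 1 - t) ht0.le (by ring)
      simp only [smul_eq_mul] at hci
      rw [hpt2] at hci
      have hgp : g p ≤ f p := convEnv_le_self hf hp
      have hxm : ((1 - t) * p + t * y) * m = x * m := by rw [hpt2]
      nlinarith [mul_lt_mul_of_pos_left hcon ht0,
        mul_le_mul_of_nonneg_left hgp (by linarith : (0:ℝ) ≤ 1 - t)]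
  have hopen : Ioo p q ∈ 𝓝 x := Ioo_mem_nhds hx0 hx1
  have hder : HasDerivAt (fun t => f p + (t - p) * m) m x := by
    simpa using (((hasDerivAt_id x).sub_const p).mul_const m).const_add (f p)
  have heq : g =ᶠ[𝓝 x] (fun t => f p + (t - p) * m) :=
    eventually_of_mem hopen (fun y hy => hgeq y hy)
  exact ⟨m, (hder.congr_of_eventuallyEq heq).hasDerivWithinAt⟩

lemma exists_hasDeriv_detach (hf : ContinuousOn f (Icc a b)) (hx : x ∈ Icc a b)
    (hlt : convEnv a b f x < f x) :
    ∃ d, HasDerivWithinAt (convEnv a b f) d (Icc a b) x := by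
  obtain ⟨l, p, q, hl, hp, hq, hpt, hval⟩ := exists_attain hf hx
  have hl0 : 0 < l := by
    rcases eq_or_lt_of_le hl.1 with h | h
    · exfalso
      rw [← h] at hpt hval
      simp only [sub_zero, one_mul, zero_mul, add_zero] at hpt hval
      rw [hpt] at hval
      linarith
    · exact h
  have hl1 : l < 1 := by
    rcases eq_or_lt_of_le hl.2 with h | h
    · exfalso
      rw [h] at hpt hval
      simp only [sub_self, zero_mul, one_mul, zero_add] at hpt hval
      rw [hpt] at hval
      linarith
    · exact h
  rcases lt_trichotomy p q with hpq | hpq | hpq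
  · exact detach_core hf hp hq hl0 hl1 hpq hpt hval
  · exfalso
    rw [hpq] at hpt hval
    have : q = x := by linarith [hpt]
    rw [this] at hval
    have : convEnv a b f x = f x := by linarith [hval]
    linarith
  · refine detach_core hf hq hp (by linarith : (0:ℝ) < 1 - l) (by linarith) hpq
      (by linarith [hpt]) ?_
    rw [hval]; ring

end Deriv

lemma hasDeriv_touch (hf : ContinuousOn f (Icc a b)) {x d : ℝ} (hax : a < x) (hxb : x < b)
    (heq : convEnv a b f x = f x) (hfd : HasDerivWithinAt f d (Icc a b) x) :
    HasDerivWithinAt (convEnv a b f) d (Icc a b) x := by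
  set g := convEnv a b f with hg
  have hconv := convexOn (f := f) hf
  have hxmem : x ∈ Icc a b := ⟨hax.le, hxb.le⟩
  rw [hasDerivWithinAt_iff_tendsto_slope] at hfd ⊢
  have hle : ∀ y ∈ Icc a b, g y ≤ f y := fun y hy => convEnv_le_self hf hy
  have key1 : ∀ y ∈ Icc a b, x < y → slope g x y ≤ slope f x y := by
    intro y hy hxy
    rw [slope_def_field, slope_def_field, div_le_div_iff_of_pos_right (by linarith : (0:ℝ) < y - x)]
    linarith [hle y hy]
  have key2 : ∀ y ∈ Icc a b, y < x → slope f x y ≤ slope g x y := by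
    intro y hy hxy
    rw [slope_def_field, slope_def_field, div_le_div_right_of_neg (by linarith : y - x < 0)]
    linarith [hle y hy]
  have keymono : ∀ y ∈ Icc a b, ∀ z ∈ Icc a b, y ≠ x → z ≠ x → y ≤ z →
      slope g x y ≤ slope g x z := by
    intro y hy z hz hyne hzne hyz
    have := hconv.secant_mono hxmem hy hz hyne hzne hyz
    simpa [slope_def_field] using this
  have hneL : (𝓝[Ioo a x] x).NeBot := by
    rw [nhdsWithin_Ioo_eq_nhdsLT hax]; infer_instance
  have hneR : (𝓝[Ioo x b] x).NeBot := by
    rw [nhdsWithin_Ioo_eq_nhdsGT hxb]; infer_instance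
  have hsubL : Ioo a x ⊆ Icc a b \ {x} := fun t ht =>
    ⟨⟨ht.1.le, ht.2.le.trans hxb.le⟩, by simp [ne_of_lt ht.2]⟩
  have hsubR : Ioo x b ⊆ Icc a b \ {x} := fun t ht =>
    ⟨⟨hax.le.trans ht.1.le, ht.2.le⟩, by simp [ne_of_gt ht.1]⟩
  have hfdL : Tendsto (slope f x) (𝓝[Ioo a x] x) (𝓝 d) :=
    hfd.mono_left (nhdsWithin_mono x hsubL)
  have hfdR : Tendsto (slope f x) (𝓝[Ioo x b] x) (𝓝 d) :=
    hfd.mono_left (nhdsWithin_mono x hsubR)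
  refine tendsto_order.2 ⟨fun c hc => ?_, fun c hc => ?_⟩
  · obtain ⟨u, hus, huI⟩ :=
      ((hfdL.eventually (eventually_gt_nhds hc)).and self_mem_nhdsWithin).exists
    have huIcc : u ∈ Icc a b := ⟨huI.1.le, huI.2.le.trans hxb.le⟩
    filter_upwards [hfd.eventually (eventually_gt_nhds hc), self_mem_nhdsWithin]
      with y hy1 hy2
    have hyne : y ≠ x := by simpa using hy2.2
    rcases lt_or_gt_of_ne hyne with hyx | hyx
    · exact lt_of_lt_of_le hy1 (key2 y hy2.1 hyx)
    · have h1 : c < slope g x u := lt_of_lt_of_le hus (key2 u huIcc huI.2)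
      have h2 : slope g x u ≤ slope g x y :=
        keymono u huIcc y hy2.1 (ne_of_lt huI.2) hyne (by linarith [huI.2])
      linarith
  · obtain ⟨u, hus, huI⟩ :=
      ((hfdR.eventually (eventually_lt_nhds hc)).and self_mem_nhdsWithin).exists
    have huIcc : u ∈ Icc a b := ⟨hax.le.trans huI.1.le, huI.2.le⟩
    filter_upwards [hfd.eventually (eventually_lt_nhds hc), self_mem_nhdsWithin]
      with y hy1 hy2
    have hyne : y ≠ x := by simpa using hy2.2
    rcases lt_or_gt_of_ne hyne with hyx | hyx
    · have h1 : slope g x y ≤ slope g x u :=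
        keymono y hy2.1 u huIcc hyne (ne_of_gt huI.1) (by linarith [huI.1])
      have h2 : slope g x u ≤ slope f x u := key1 u huIcc huI.1
      linarith
    · exact lt_of_le_of_lt (key1 y hy2.1 hyx) hy1

section Generic

variable {g : ℝ → ℝ}

lemma neBot_punctured (hab : a < b) (hx : x ∈ Icc a b) : (𝓝[Icc a b \ {x}] x).NeBot := by
  rcases eq_or_lt_of_le hx.2 with hxb | hxb
  · subst hxb
    have hsub : Ioo a x ⊆ Icc a x \ {x} := fun t ht =>
      ⟨⟨ht.1.le, ht.2.le⟩, by simp [ne_of_lt ht.2]⟩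
    have h1 : (𝓝[Ioo a x] x).NeBot := by
      rw [nhdsWithin_Ioo_eq_nhdsLT hab]; infer_instance
    exact h1.mono (nhdsWithin_mono x hsub)
  · have hsub : Ioo x b ⊆ Icc a b \ {x} := fun t ht =>
      ⟨⟨hx.1.trans ht.1.le, ht.2.le⟩, by simp [ne_of_gt ht.1]⟩
    have h1 : (𝓝[Ioo x b] x).NeBot := by
      rw [nhdsWithin_Ioo_eq_nhdsGT hxb]; infer_instance
    exact h1.mono (nhdsWithin_mono x hsub)

lemma derivWithin_le_slope (hab : a < b) (hconv : ConvexOn ℝ (Icc a b) g)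
    (hdiff : DifferentiableOn ℝ g (Icc a b)) (hx : x ∈ Icc a b) (hy : y ∈ Icc a b)
    (hxy : x < y) : derivWithin g (Icc a b) x ≤ slope g x y := by
  haveI := neBot_punctured hab hx
  have htend := hasDerivWithinAt_iff_tendsto_slope.1 (hdiff x hx).hasDerivWithinAt
  refine le_of_tendsto htend ?_
  filter_upwards [self_mem_nhdsWithin, mem_nhdsWithin_of_mem_nhds (Iio_mem_nhds hxy)]
    with t ht1 ht2
  have := hconv.secant_mono hx ht1.1 hy (by simpa using ht1.2) (ne_of_gt hxy) (le_of_lt ht2)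
  simpa [slope_def_field] using this

lemma slope_le_derivWithin (hab : a < b) (hconv : ConvexOn ℝ (Icc a b) g)
    (hdiff : DifferentiableOn ℝ g (Icc a b)) (hx : x ∈ Icc a b) (hy : y ∈ Icc a b)
    (hxy : x < y) : slope g x y ≤ derivWithin g (Icc a b) y := by
  haveI := neBot_punctured hab hy
  have htend := hasDerivWithinAt_iff_tendsto_slope.1 (hdiff y hy).hasDerivWithinAt
  rw [slope_comm]
  refine ge_of_tendsto htend ?_
  filter_upwards [self_mem_nhdsWithin, mem_nhdsWithin_of_mem_nhds (Ioi_mem_nhds hxy)]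
    with t ht1 ht2
  have := hconv.secant_mono hy hx ht1.1 (ne_of_lt hxy) (by simpa using ht1.2) (le_of_lt ht2)
  simpa [slope_def_field] using this

lemma derivWithin_monotoneOn (hab : a < b) (hconv : ConvexOn ℝ (Icc a b) g)
    (hdiff : DifferentiableOn ℝ g (Icc a b)) :
    MonotoneOn (derivWithin g (Icc a b)) (Icc a b) := by
  intro x hx y hy hxy
  rcases eq_or_lt_of_le hxy with rfl | h
  · exact le_refl _
  · exact (derivWithin_le_slope hab hconv hdiff hx hy h).trans
      (slope_le_derivWithin hab hconv hdiff hx hy h)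

end Generic

section Generic2

variable {g : ℝ → ℝ}

lemma continuousOn_derivWithin_of_convex (hab : a < b) (hconv : ConvexOn ℝ (Icc a b) g)
    (hgc : ContinuousOn g (Icc a b)) (hdiff : DifferentiableOn ℝ g (Icc a b)) :
    ContinuousOn (derivWithin g (Icc a b)) (Icc a b) := by
  set φ := derivWithin g (Icc a b) with hφ
  have hmono := derivWithin_monotoneOn hab hconv hdiff
  intro x hx
  rw [← continuousWithinAt_diff_self]
  have hsplit : Icc a b \ {x} = (Icc a b ∩ Iio x) ∪ (Icc a b ∩ Ioi x) := by
    ext t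
    constructor
    · rintro ⟨ht, htne⟩
      rcases lt_or_gt_of_ne (show t ≠ x by simpa using htne) with h | h
      · exact Or.inl ⟨ht, h⟩
      · exact Or.inr ⟨ht, h⟩
    · rintro (⟨h1, h2⟩ | ⟨h1, h2⟩)
      · exact ⟨h1, by simp only [mem_singleton_iff]; exact ne_of_lt (h2 : t < x)⟩
      · exact ⟨h1, by simp only [mem_singleton_iff]; exact ne_of_gt (h2 : x < t)⟩
  rw [hsplit]
  apply ContinuousWithinAt.union
  · -- left approach
    rcases eq_or_lt_of_le hx.1 with hax | hax
    · have hempty : Icc a b ∩ Iio x = ∅ := by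
        ext t
        simp only [mem_inter_iff, mem_Icc, mem_Iio, mem_empty_iff_false, iff_false]
        rintro ⟨⟨h1, -⟩, h2⟩
        rw [← hax] at h2
        linarith
      rw [ContinuousWithinAt, hempty, nhdsWithin_empty]
      exact tendsto_bot
    · have hsub1 : Ioo a x ⊆ Icc a b ∩ Iio x := fun t ht =>
        ⟨⟨ht.1.le, ht.2.le.trans hx.2⟩, ht.2⟩
      haveI hne : (𝓝[Icc a b ∩ Iio x] x).NeBot := by
        refine Filter.NeBot.mono ?_ (nhdsWithin_mono x hsub1)
        rw [nhdsWithin_Ioo_eq_nhdsLT hax]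
        infer_instance
      have hsub2 : Icc a b ∩ Iio x ⊆ Icc a b \ {x} := fun t ht =>
        ⟨ht.1, by simp only [mem_singleton_iff]; exact ne_of_lt (ht.2 : t < x)⟩
      show Tendsto φ (𝓝[Icc a b ∩ Iio x] x) (𝓝 (φ x))
      refine tendsto_order.2 ⟨fun c hc => ?_, fun c hc => ?_⟩
      · -- c < φ x : find z < x with slope g z x > c
        have htend := hasDerivWithinAt_iff_tendsto_slope.1 (hdiff x hx).hasDerivWithinAt
        have htend' : Tendsto (slope g x) (𝓝[Icc a b ∩ Iio x] x) (𝓝 (φ x)) :=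
          htend.mono_left (nhdsWithin_mono _ hsub2)
        obtain ⟨z, hzs, hzI⟩ :=
          ((htend'.eventually (eventually_gt_nhds hc)).and self_mem_nhdsWithin).exists
        have hzIcc : z ∈ Icc a b := hzI.1
        have hzx : z < x := hzI.2
        have hslopezx : c < slope g z x := by rwa [slope_comm] at hzs
        have hgy : Tendsto g (𝓝[Icc a b ∩ Iio x] x) (𝓝 (g x)) :=
          (hgc x hx).mono_left (nhdsWithin_mono _ inter_subset_left)
        have hid : Tendsto (fun y : ℝ => y) (𝓝[Icc a b ∩ Iio x] x) (𝓝 x) :=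
          (continuous_id.tendsto x).mono_left nhdsWithin_le_nhds
        have hslopetend : Tendsto (fun y => slope g z y) (𝓝[Icc a b ∩ Iio x] x)
            (𝓝 (slope g z x)) := by
          have h1 : Tendsto (fun y => (g y - g z) / (y - z)) (𝓝[Icc a b ∩ Iio x] x)
              (𝓝 ((g x - g z) / (x - z))) :=
            (hgy.sub tendsto_const_nhds).div (hid.sub tendsto_const_nhds)
              (by intro h; rw [sub_eq_zero] at h; exact (ne_of_gt hzx) h)
          simp only [slope_def_field]
          exact h1
        filter_upwards [hslopetend.eventually (eventually_gt_nhds hslopezx),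
          self_mem_nhdsWithin, mem_nhdsWithin_of_mem_nhds (Ioi_mem_nhds hzx)]
          with y hy1 hy2 hy3
        have : slope g z y ≤ φ y := slope_le_derivWithin hab hconv hdiff hzIcc hy2.1 hy3
        linarith
      · -- φ x < c : monotone gives φ y ≤ φ x
        filter_upwards [self_mem_nhdsWithin] with y hy
        exact lt_of_le_of_lt (hmono hy.1 hx hy.2.le) hc
  · -- right approach
    rcases eq_or_lt_of_le hx.2 with hxb | hxb
    · have hempty : Icc a b ∩ Ioi x = ∅ := by
        ext t
        simp only [mem_inter_iff, mem_Icc, mem_Ioi, mem_empty_iff_false, iff_false]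
        rintro ⟨⟨-, h1⟩, h2⟩
        rw [hxb] at h2
        linarith
      rw [ContinuousWithinAt, hempty, nhdsWithin_empty]
      exact tendsto_bot
    · have hsub1 : Ioo x b ⊆ Icc a b ∩ Ioi x := fun t ht =>
        ⟨⟨hx.1.trans ht.1.le, ht.2.le⟩, ht.1⟩
      haveI hne : (𝓝[Icc a b ∩ Ioi x] x).NeBot := by
        refine Filter.NeBot.mono ?_ (nhdsWithin_mono x hsub1)
        rw [nhdsWithin_Ioo_eq_nhdsGT hxb]
        infer_instance
      have hsub2 : Icc a b ∩ Ioi x ⊆ Icc a b \ {x} := fun t ht =>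
        ⟨ht.1, by simp only [mem_singleton_iff]; exact ne_of_gt (ht.2 : x < t)⟩
      show Tendsto φ (𝓝[Icc a b ∩ Ioi x] x) (𝓝 (φ x))
      refine tendsto_order.2 ⟨fun c hc => ?_, fun c hc => ?_⟩
      · filter_upwards [self_mem_nhdsWithin] with y hy
        exact lt_of_lt_of_le hc (hmono hx hy.1 hy.2.le)
      · have htend := hasDerivWithinAt_iff_tendsto_slope.1 (hdiff x hx).hasDerivWithinAt
        have htend' : Tendsto (slope g x) (𝓝[Icc a b ∩ Ioi x] x) (𝓝 (φ x)) :=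
          htend.mono_left (nhdsWithin_mono _ hsub2)
        obtain ⟨z, hzs, hzI⟩ :=
          ((htend'.eventually (eventually_lt_nhds hc)).and self_mem_nhdsWithin).exists
        have hzIcc : z ∈ Icc a b := hzI.1
        have hzx : x < z := hzI.2
        have hgy : Tendsto g (𝓝[Icc a b ∩ Ioi x] x) (𝓝 (g x)) :=
          (hgc x hx).mono_left (nhdsWithin_mono _ inter_subset_left)
        have hid : Tendsto (fun y : ℝ => y) (𝓝[Icc a b ∩ Ioi x] x) (𝓝 x) :=
          (continuous_id.tendsto x).mono_left nhdsWithin_le_nhds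
        have hslopetend : Tendsto (fun y => slope g y z) (𝓝[Icc a b ∩ Ioi x] x)
            (𝓝 (slope g x z)) := by
          have h1 : Tendsto (fun y => (g z - g y) / (z - y)) (𝓝[Icc a b ∩ Ioi x] x)
              (𝓝 ((g z - g x) / (z - x))) :=
            (tendsto_const_nhds.sub hgy).div (tendsto_const_nhds.sub hid)
              (by intro h; rw [sub_eq_zero] at h; exact (ne_of_gt hzx) h.symm.symm)
          simp only [slope_def_field]
          exact h1
        filter_upwards [hslopetend.eventually (eventually_lt_nhds hzs),
          self_mem_nhdsWithin, mem_nhdsWithin_of_mem_nhds (Iio_mem_nhds hzx)]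
          with y hy1 hy2 hy3
        have : φ y ≤ slope g y z := derivWithin_le_slope hab hconv hdiff hy2.1 hzIcc hy3
        linarith

end Generic2

end ConvEnvAux

open ConvEnvAux in
/-- If `f` is `C¹` on `[a,b]`, then its convex envelope `f**` is `C¹` on `[a,b]`. -/
theorem convEnv_contDiffOn (a b : ℝ) (hab : a < b) (f : ℝ → ℝ)
    (hf : ContDiffOn ℝ 1 f (Set.Icc a b)) :
    ContDiffOn ℝ 1 (convEnv a b f) (Set.Icc a b) := by
  have hu : UniqueDiffOn ℝ (Set.Icc a b) := uniqueDiffOn_Icc hab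
  have h1 : (1 : WithTop ℕ∞) = 0 + 1 := by norm_num
  have hfc : ContinuousOn f (Set.Icc a b) := hf.continuousOn
  have hfd : DifferentiableOn ℝ f (Set.Icc a b) := hf.differentiableOn one_ne_zero
  have hf' := (contDiffOn_succ_iff_derivWithin (n := 0) hu).1 (h1 ▸ hf)
  have hdWc : ContinuousOn (derivWithin f (Set.Icc a b)) (Set.Icc a b) :=
    contDiffOn_zero.1 hf'.2.2
  obtain ⟨C, hC⟩ := isCompact_Icc.exists_bound_of_continuousOn hdWc
  set L := max C 0 with hLdef
  have hL0 : 0 ≤ L := le_max_right C 0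
  have hLf : ∀ p ∈ Set.Icc a b, ∀ q ∈ Set.Icc a b, |f p - f q| ≤ L * |p - q| := by
    intro p hp q hq
    have := Convex.norm_image_sub_le_of_norm_derivWithin_le hfd
      (fun x hx => (hC x hx).trans (le_max_left C 0)) (convex_Icc a b) hq hp
    simpa [Real.norm_eq_abs] using this
  have hgc : ContinuousOn (convEnv a b f) (Set.Icc a b) :=
    continuousOn_convEnv hab.le hfc hL0 hLf
  have hconv : ConvexOn ℝ (Set.Icc a b) (convEnv a b f) := convexOn hfc
  have hdiffg : DifferentiableOn ℝ (convEnv a b f) (Set.Icc a b) := by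
    intro x hx
    rcases eq_or_lt_of_le hx.1 with hax | hax
    · obtain ⟨d, hd⟩ := exists_hasDeriv_left hab hfc hL0 hLf
      rw [← hax]
      exact hd.differentiableWithinAt
    · rcases eq_or_lt_of_le hx.2 with hxb | hxb
      · obtain ⟨d, hd⟩ := exists_hasDeriv_right hab hfc hL0 hLf
        rw [hxb]
        exact hd.differentiableWithinAt
      · by_cases htouch : convEnv a b f x = f x
        · exact (hasDeriv_touch hfc hax hxb htouch
            ((hfd x hx).hasDerivWithinAt)).differentiableWithinAt
        · have hlt : convEnv a b f x < f x :=
            lt_of_le_of_ne (convEnv_le_self hfc hx) htouch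
          obtain ⟨d, hd⟩ := exists_hasDeriv_detach hfc hx hlt
          exact hd.differentiableWithinAt
  rw [h1, contDiffOn_succ_iff_derivWithin hu]
  refine ⟨hdiffg, by simp, ?_⟩
  exact contDiffOn_zero.2 (continuousOn_derivWithin_of_convex hab hconv hgc hdiffg)
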